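/- (Decay: stationary states on the kernel.) Let h be an indecomposable n×n complex matrix with nontrivial kernel. Then a density matrix ρ satisfies D_h(ρ) = 0 if and only if hρ = 0, i.e. if and only if the range of ρ is contained in the kernel of h; the stationary states are exactly the states supported on the proper eigenspace of h to the eigenvalue zero. -/

import Mathlib

open Matrix
open scoped ComplexOrder

/-- The simple Lindblad generator `D_h`. -/
noncomputable def lindblad {n : ℕ} (h ρ : Matrix (Fin n) (Fin n) ℂ) :
    Matrix (Fin n) (Fin n) ℂ :=
  h * ρ * hᴴ - (1 / 2 : ℂ) • (hᴴ * h * ρ + ρ * (hᴴ * h))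

/-- A matrix is indecomposable if the only orthogonal projections commuting with it
are `0` and `1`. -/
def Indecomposable {n : ℕ} (h : Matrix (Fin n) (Fin n) ℂ) : Prop :=
  ∀ P : Matrix (Fin n) (Fin n) ℂ, P = Pᴴ → P * P = P → P * h = h * P → P = 0 ∨ P = 1

namespace Stmt11Aux

variable {n : ℕ}

/-- The support projection of a Hermitian matrix. -/
noncomputable def supp {A : Matrix (Fin n) (Fin n) ℂ} (hA : A.IsHermitian) :
    Matrix (Fin n) (Fin n) ℂ :=
  (hA.eigenvectorUnitary : Matrix (Fin n) (Fin n) ℂ) *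
    diagonal (fun i => if hA.eigenvalues i = 0 then (0 : ℂ) else 1) *
    star (hA.eigenvectorUnitary : Matrix (Fin n) (Fin n) ℂ)

variable {A : Matrix (Fin n) (Fin n) ℂ} (hA : A.IsHermitian)

private lemma star_U_mul_U :
    star (hA.eigenvectorUnitary : Matrix (Fin n) (Fin n) ℂ) *
      (hA.eigenvectorUnitary : Matrix (Fin n) (Fin n) ℂ) = 1 :=
  Unitary.coe_star_mul_self _

private lemma spec_eq : (hA.eigenvectorUnitary : Matrix (Fin n) (Fin n) ℂ) *
    diagonal (RCLike.ofReal ∘ hA.eigenvalues) *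
      star (hA.eigenvectorUnitary : Matrix (Fin n) (Fin n) ℂ) = A := by
  simpa only [Unitary.conjStarAlgAut_apply] using hA.spectral_theorem.symm

private lemma diag_star : (fun i => star (if hA.eigenvalues i = 0 then (0 : ℂ) else 1))
    = (fun i => if hA.eigenvalues i = 0 then (0 : ℂ) else 1) := by
  funext i
  split <;> simp

private lemma diag_sq : (fun i => (if hA.eigenvalues i = 0 then (0 : ℂ) else 1) *
      (if hA.eigenvalues i = 0 then (0 : ℂ) else 1))
    = (fun i => if hA.eigenvalues i = 0 then (0 : ℂ) else 1) := by
  funext i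
  split <;> simp

private lemma diag_absorb : (fun i => (if hA.eigenvalues i = 0 then (0 : ℂ) else 1) *
      (RCLike.ofReal ∘ hA.eigenvalues) i) = (RCLike.ofReal ∘ hA.eigenvalues) := by
  funext i
  by_cases hi : hA.eigenvalues i = 0 <;> simp [hi, Function.comp]

lemma supp_conjTranspose : (supp hA)ᴴ = supp hA := by
  have hd : (diagonal (fun i => if hA.eigenvalues i = 0 then (0 : ℂ) else 1))ᴴ
      = diagonal (fun i => if hA.eigenvalues i = 0 then (0 : ℂ) else 1) := by
    rw [diagonal_conjTranspose]
    show diagonal (fun i => star (if hA.eigenvalues i = 0 then (0 : ℂ) else 1)) = _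
    rw [diag_star]
  rw [supp, conjTranspose_mul, conjTranspose_mul, hd]
  have h2 : ∀ M : Matrix (Fin n) (Fin n) ℂ, Mᴴ = star M := fun _ => rfl
  rw [h2, h2, star_star, mul_assoc]

lemma supp_mul_supp : supp hA * supp hA = supp hA := by
  rw [supp]
  simp only [mul_assoc]
  rw [← mul_assoc (star (hA.eigenvectorUnitary : Matrix (Fin n) (Fin n) ℂ)), star_U_mul_U,
    one_mul, ← mul_assoc (diagonal _) (diagonal _), diagonal_mul_diagonal, diag_sq]

lemma supp_mul_self : supp hA * A = A := by
  set U : Matrix (Fin n) (Fin n) ℂ := (hA.eigenvectorUnitary : Matrix (Fin n) (Fin n) ℂ) with hU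
  calc supp hA * A
      = supp hA * (U * (diagonal (RCLike.ofReal ∘ hA.eigenvalues) * star U)) := by
        rw [← mul_assoc U, spec_eq hA]
    _ = U * (diagonal (RCLike.ofReal ∘ hA.eigenvalues) * star U) := by
        rw [supp]
        simp only [mul_assoc]
        rw [← mul_assoc (star U) U, star_U_mul_U, one_mul,
          ← mul_assoc (diagonal _) (diagonal _), diagonal_mul_diagonal, diag_absorb]
    _ = A := by rw [← mul_assoc U, spec_eq hA]

lemma supp_mul_eq_zero {m : Type*} [Fintype m] {X : Matrix (Fin n) m ℂ}
    (hX : A * X = 0) : supp hA * X = 0 := by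
  set U : Matrix (Fin n) (Fin n) ℂ := (hA.eigenvectorUnitary : Matrix (Fin n) (Fin n) ℂ) with hU
  set D : Matrix (Fin n) (Fin n) ℂ := diagonal (RCLike.ofReal ∘ hA.eigenvalues) with hD
  have hsp : A = U * D * star U := (spec_eq hA).symm
  have h1 : star U * (U * D * star U * X) = D * (star U * X) := by
    simp only [Matrix.mul_assoc]
    rw [← Matrix.mul_assoc (star U) U, star_U_mul_U, Matrix.one_mul]
  have key : D * (star U * X) = 0 := by
    calc D * (star U * X) = star U * (U * D * star U * X) := h1.symm
      _ = star U * (A * X) := by rw [← hsp]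
      _ = 0 := by rw [hX, Matrix.mul_zero]
  have key2 : diagonal (fun i => if hA.eigenvalues i = 0 then (0 : ℂ) else 1) * (star U * X) = 0 := by
    ext i j
    have hk := congrFun (congrFun key i) j
    simp only [hD, diagonal_mul, Matrix.zero_apply, Function.comp] at hk ⊢
    by_cases hi : hA.eigenvalues i = 0
    · simp [hi]
    · have hne : (RCLike.ofReal (hA.eigenvalues i) : ℂ) ≠ 0 := by simpa using hi
      have hz : (star U * X) i j = 0 := (mul_eq_zero.mp hk).resolve_left hne
      simp [hi, hz]
  rw [supp, ← hU]
  rw [Matrix.mul_assoc (U * diagonal _) (star U) X, Matrix.mul_assoc U (diagonal _) (star U * X),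
    key2, Matrix.mul_zero]

lemma mul_supp_eq_zero {m : Type*} [Fintype m] {X : Matrix m (Fin n) ℂ}
    (hX : X * A = 0) : X * supp hA = 0 := by
  have h1 : A * Xᴴ = 0 := by
    have h := congrArg conjTranspose hX
    rwa [conjTranspose_mul, hA.eq, conjTranspose_zero] at h
  have h2 := supp_mul_eq_zero hA h1
  have h3 := congrArg conjTranspose h2
  rwa [conjTranspose_mul, conjTranspose_conjTranspose, supp_conjTranspose, conjTranspose_zero]
    at h3

lemma supp_mulVec_eq_zero {x : Fin n → ℂ} (hx : A.mulVec x = 0) : (supp hA).mulVec x = 0 := by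
  have hX : A * (Matrix.of fun i (_ : Fin n) => x i) = 0 := by
    ext i j
    have h := congrFun hx i
    simpa [Matrix.mul_apply, Matrix.mulVec, dotProduct] using h
  have h2 := supp_mul_eq_zero hA hX
  funext i
  have h := congrFun (congrFun h2 i) i
  simpa [Matrix.mul_apply, Matrix.mulVec, dotProduct] using h

lemma self_mul_supp : A * supp hA = A := by
  have h := congrArg conjTranspose (supp_mul_self hA)
  rwa [conjTranspose_mul, supp_conjTranspose, hA.eq] at h

end Stmt11Aux

/-- Decay: the stationary states are exactly the states supported on `ker h`. -/
theorem stmt11 {n : ℕ} (h : Matrix (Fin n) (Fin n) ℂ)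
    (hind : Indecomposable h)
    (hker : ∃ v : Fin n → ℂ, v ≠ 0 ∧ h.mulVec v = 0)
    (ρ : Matrix (Fin n) (Fin n) ℂ) (hρ : ρ.PosSemidef) (htr : ρ.trace = 1) :
    lindblad h ρ = 0 ↔ h * ρ = 0 := by
  constructor
  · intro hE
    simp only [lindblad] at hE
    have E1 : h * ρ * hᴴ = (1 / 2 : ℂ) • (hᴴ * h * ρ + ρ * (hᴴ * h)) := sub_eq_zero.mp hE
    have E2 : hᴴ * h * ρ + ρ * (hᴴ * h) = h * ρ * hᴴ + h * ρ * hᴴ := by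
      rw [E1, ← two_smul ℂ, smul_smul]
      norm_num
    -- basic objects
    have ρh : ρ.IsHermitian := hρ.1
    obtain ⟨s, hsSA, -, hss⟩ : ∃ s : Matrix (Fin n) (Fin n) ℂ, IsSelfAdjoint s ∧
        QuasispectrumRestricts s ContinuousMap.realToNNReal ∧ s * s = ρ := by
      open scoped MatrixOrder in
      exact CFC.exists_sqrt_of_isSelfAdjoint_of_quasispectrumRestricts hρ.1
        (QuasispectrumRestricts.nnreal_of_nonneg hρ.nonneg)
    have hsH : sᴴ = s := hsSA
    have hN : (hᴴ * h).IsHermitian := isHermitian_conjTranspose_mul_self h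
    set P : Matrix (Fin n) (Fin n) ℂ := Stmt11Aux.supp ρh with hPdef
    set S : Matrix (Fin n) (Fin n) ℂ := Stmt11Aux.supp hN with hSdef
    have hPH : Pᴴ = P := Stmt11Aux.supp_conjTranspose ρh
    have hP2 : P * P = P := Stmt11Aux.supp_mul_supp ρh
    have hPρ : P * ρ = ρ := Stmt11Aux.supp_mul_self ρh
    have hρP : ρ * P = ρ := Stmt11Aux.self_mul_supp ρh
    have hSH : Sᴴ = S := Stmt11Aux.supp_conjTranspose hN
    have hS2 : S * S = S := Stmt11Aux.supp_mul_supp hN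
    have hSN : S * (hᴴ * h) = hᴴ * h := Stmt11Aux.supp_mul_self hN
    have hNS : (hᴴ * h) * S = hᴴ * h := Stmt11Aux.self_mul_supp hN
    obtain ⟨Q, hQdef⟩ : ∃ Q, Q = (1 : Matrix (Fin n) (Fin n) ℂ) - P := ⟨_, rfl⟩
    obtain ⟨K, hKdef⟩ : ∃ K, K = (1 : Matrix (Fin n) (Fin n) ℂ) - S := ⟨_, rfl⟩
    have hPQ1 : P + Q = 1 := by rw [hQdef]; noncomm_ring
    have hSK1 : S + K = 1 := by rw [hKdef]; noncomm_ring
    have hQH : Qᴴ = Q := by rw [hQdef, conjTranspose_sub, conjTranspose_one, hPH]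
    have hρQ : ρ * Q = 0 := by rw [hQdef, Matrix.mul_sub, Matrix.mul_one, hρP, sub_self]
    have hQρ : Q * ρ = 0 := by rw [hQdef, Matrix.sub_mul, Matrix.one_mul, hPρ, sub_self]
    have hPQ0 : P * Q = 0 := by
      linear_combination (norm := noncomm_ring) P * hPQ1 - hP2
    -- Step A : h * S = h
    have hhS : h * S = h := by
      have w : (h - h * S)ᴴ * (h - h * S) = 0 := by
        rw [conjTranspose_sub, conjTranspose_mul, hSH]
        linear_combination (norm := noncomm_ring) S * hNS - hNS
      have := conjTranspose_mul_self_eq_zero.mp w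
      have := sub_eq_zero.mp this
      exact this.symm
    have hShH : S * hᴴ = hᴴ := by
      have := congrArg conjTranspose hhS
      rwa [conjTranspose_mul, hSH] at this
    have hhK : h * K = 0 := by rw [hKdef, Matrix.mul_sub, Matrix.mul_one, hhS, sub_self]
    have hKhH : K * hᴴ = 0 := by rw [hKdef, Matrix.sub_mul, Matrix.one_mul, hShH, sub_self]
    have hSK0 : S * K = 0 := by rw [hKdef, Matrix.mul_sub, Matrix.mul_one, hS2, sub_self]
    -- Step C : Q * (h*s) = 0 and consequences
    have twoNeZero : (2 : ℂ) ≠ 0 := by norm_num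
    have hQhs : Q * (h * s) = 0 := by
      have w2 : (Q * (h * s)) * (Q * (h * s))ᴴ + (Q * (h * s)) * (Q * (h * s))ᴴ = 0 := by
        rw [conjTranspose_mul, conjTranspose_mul, hQH, hsH]
        linear_combination (norm := noncomm_ring)
          Q * h * hss * hᴴ * Q + Q * h * hss * hᴴ * Q - Q * E2 * Q
            + Q * (hᴴ * h) * hρQ + hQρ * (hᴴ * h) * Q
      have w3 : (Q * (h * s)) * (Q * (h * s))ᴴ = 0 := by
        have h2 : (2 : ℂ) • ((Q * (h * s)) * (Q * (h * s))ᴴ) = 0 := by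
          rw [two_smul]; exact w2
        exact (smul_eq_zero.mp h2).resolve_left twoNeZero
      exact self_mul_conjTranspose_eq_zero.mp w3
    have hshHQ : s * hᴴ * Q = 0 := by
      have := congrArg conjTranspose hQhs
      rwa [conjTranspose_mul, conjTranspose_mul, hQH, hsH, conjTranspose_zero] at this
    have hQhρ : Q * (h * ρ) = 0 := by
      linear_combination (norm := noncomm_ring) hQhs * s - Q * h * hss
    have hQhP : Q * h * P = 0 := by
      have h1 : (Q * h) * ρ = 0 := by rw [Matrix.mul_assoc]; exact hQhρ
      exact Stmt11Aux.mul_supp_eq_zero ρh h1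
    have hPhHQ : P * hᴴ * Q = 0 := by
      have := congrArg conjTranspose hQhP
      rwa [conjTranspose_mul, conjTranspose_mul, hQH, hPH, conjTranspose_zero,
        ← Matrix.mul_assoc] at this
    -- Step L5 : K * (h*s) = 0 and K commutes with rho
    have hKH : Kᴴ = K := by rw [hKdef, conjTranspose_sub, conjTranspose_one, hSH]
    have hKhs : K * (h * s) = 0 := by
      have w2 : (K * (h * s)) * (K * (h * s))ᴴ + (K * (h * s)) * (K * (h * s))ᴴ = 0 := by
        rw [conjTranspose_mul, conjTranspose_mul, hKH, hsH]
        linear_combination (norm := noncomm_ring)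
          K * h * hss * hᴴ * K + K * h * hss * hᴴ * K - K * E2 * K
            + hKhH * (h * ρ * K) + K * ρ * hᴴ * hhK
      have w3 : (K * (h * s)) * (K * (h * s))ᴴ = 0 := by
        have h2 : (2 : ℂ) • ((K * (h * s)) * (K * (h * s))ᴴ) = 0 := by
          rw [two_smul]; exact w2
        exact (smul_eq_zero.mp h2).resolve_left twoNeZero
      exact self_mul_conjTranspose_eq_zero.mp w3
    have hKhρ : K * (h * ρ) = 0 := by
      linear_combination (norm := noncomm_ring) hKhs * s - K * h * hss
    have hKρN : (K * ρ) * (hᴴ * h) = 0 := by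
      linear_combination (norm := noncomm_ring)
        K * E2 - hKhH * (h * ρ) + hKhρ * hᴴ + hKhρ * hᴴ
    have hKρS : (K * ρ) * S = 0 := Stmt11Aux.mul_supp_eq_zero hN hKρN
    have hKρK : K * ρ = K * ρ * K := by
      linear_combination (norm := noncomm_ring) hKρS - K * ρ * hSK1
    have hcommKρ : K * ρ = ρ * K := by
      have h2 := congrArg conjTranspose hKρK
      rw [conjTranspose_mul, conjTranspose_mul, conjTranspose_mul, hKH, ρh.eq] at h2
      -- h2 : ρ * K = K * (ρ * K)  (up to assoc)
      linear_combination (norm := noncomm_ring) hKρK - h2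
    have hcommSρ : S * ρ = ρ * S := by
      linear_combination (norm := noncomm_ring) hSK1 * ρ - ρ * hSK1 - hcommKρ
    have hQSρ : (Q * S) * ρ = 0 := by
      linear_combination (norm := noncomm_ring) Q * hcommSρ + hQρ * S
    have hQSP : (Q * S) * P = 0 := Stmt11Aux.mul_supp_eq_zero ρh hQSρ
    have hSP_PSP : S * P = P * S * P := by
      linear_combination (norm := noncomm_ring) hQSP - hPQ1 * (S * P)
    have hcommSP : P * S = S * P := by
      have h2 := congrArg conjTranspose hSP_PSP
      rw [conjTranspose_mul, conjTranspose_mul, conjTranspose_mul, hSH, hPH] at h2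
      linear_combination (norm := noncomm_ring) h2 + P * hSP_PSP + hP2 * (S * P) - hSP_PSP
    -- L8 : rho * N * Q = 0 and P * N * Q = 0
    have hρNQ : ρ * ((hᴴ * h) * Q) = 0 := by
      linear_combination (norm := noncomm_ring)
        P * E2 * Q - P * (hᴴ * h) * hρQ + P * h * s * hshHQ + P * h * s * hshHQ
          - P * h * hss * hᴴ * Q - P * h * hss * hᴴ * Q - hPρ * (hᴴ * h) * Q
    have hPNQ : P * ((hᴴ * h) * Q) = 0 := Stmt11Aux.supp_mul_eq_zero ρh hρNQ
    -- L12 : a^H b = 0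
    have hab : (P * hᴴ * P) * (P * h * Q) = 0 := by
      linear_combination (norm := noncomm_ring)
        P * hᴴ * hP2 * (h * Q) + hPNQ + P * hᴴ * hPQ1 * (h * Q) - hPhHQ * (h * Q)
    -- L9 : P h P = (PS) h (PS)
    have hKhP : K * h * P = 0 := by
      have h1 : (K * h) * ρ = 0 := by rw [Matrix.mul_assoc]; exact hKhρ
      exact Stmt11Aux.mul_supp_eq_zero ρh h1
    have hcommPK : P * K = K * P := by
      linear_combination (norm := noncomm_ring) P * hSK1 - hSK1 * P - hcommSP
    have hhPK : h * (P * K) = 0 := by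
      linear_combination (norm := noncomm_ring) h * hcommPK + hhK * P
    have hL9a : P * h * P = (P * S) * (h * P) := by
      linear_combination (norm := noncomm_ring) P * hKhP - P * hSK1 * h * P
    have hL9 : P * h * P = (P * S) * h * (P * S) := by
      linear_combination (norm := noncomm_ring) hL9a - P * S * h * P * hSK1 + P * S * hhPK
    -- R := P * S basic facts
    have hRH : (P * S)ᴴ = P * S := by
      rw [conjTranspose_mul, hPH, hSH, ← hcommSP]
    have hR2 : (P * S) * (P * S) = P * S := by
      linear_combination (norm := noncomm_ring) hP2 * (S * S) + P * hS2 - P * hcommSP * S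
    have hRa0 : (P * S) * (P * h * P) = P * h * P := by
      linear_combination (norm := noncomm_ring) P * S * hL9 + hR2 * (h * (P * S)) - hL9
    have hhP : h * P = P * (h * P) := by
      linear_combination (norm := noncomm_ring) hQhP - hPQ1 * h * P
    -- the auxiliary invertible matrix c
    set c : Matrix (Fin n) (Fin n) ℂ := P * h * P + (1 - P * S) with hcdef
    have hcKer : ∀ x : Fin n → ℂ, c *ᵥ x = 0 → x = 0 := by
      intro x hx
      have hm : ((1 : Matrix (Fin n) (Fin n) ℂ) - P * S) * c
          = (1 : Matrix (Fin n) (Fin n) ℂ) - P * S := by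
        rw [hcdef]
        linear_combination (norm := noncomm_ring) hR2 - hRa0
      have h1 : ((1 : Matrix (Fin n) (Fin n) ℂ) - P * S) *ᵥ x = 0 := by
        calc ((1 : Matrix (Fin n) (Fin n) ℂ) - P * S) *ᵥ x
            = (((1 : Matrix (Fin n) (Fin n) ℂ) - P * S) * c) *ᵥ x := by rw [hm]
          _ = ((1 : Matrix (Fin n) (Fin n) ℂ) - P * S) *ᵥ (c *ᵥ x) := by
              rw [mulVec_mulVec]
          _ = 0 := by rw [hx, mulVec_zero]
      have hxR : (P * S) *ᵥ x = x := by
        rw [sub_mulVec, one_mulVec, sub_eq_zero] at h1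
        exact h1.symm
      have hPx : P *ᵥ x = x := by
        calc P *ᵥ x = P *ᵥ ((P * S) *ᵥ x) := by rw [hxR]
          _ = (P * (P * S)) *ᵥ x := by rw [mulVec_mulVec]
          _ = (P * S) *ᵥ x := by
              rw [show P * (P * S) = P * S from by
                rw [← Matrix.mul_assoc, hP2]]
          _ = x := hxR
      have hax : (P * h * P) *ᵥ x = 0 := by
        have h3 := hx
        rw [hcdef, add_mulVec, h1, add_zero] at h3
        exact h3
      have hhx : h *ᵥ x = 0 := by
        calc h *ᵥ x = h *ᵥ (P *ᵥ x) := by rw [hPx]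
          _ = (h * P) *ᵥ x := by rw [mulVec_mulVec]
          _ = (P * h * P) *ᵥ x := by
              rw [show h * P = P * h * P from by rw [hhP, ← Matrix.mul_assoc]]
          _ = 0 := hax
      have hNx : (hᴴ * h) *ᵥ x = 0 := by
        rw [← mulVec_mulVec, hhx, mulVec_zero]
      have hSx : S *ᵥ x = 0 := Stmt11Aux.supp_mulVec_eq_zero hN hNx
      calc x = (P * S) *ᵥ x := hxR.symm
        _ = P *ᵥ (S *ᵥ x) := by rw [mulVec_mulVec]
        _ = 0 := by rw [hSx, mulVec_zero]
    have hdet : IsUnit c.det := by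
      rw [isUnit_iff_ne_zero]
      intro hdz
      obtain ⟨v, hv0, hv⟩ := Matrix.exists_mulVec_eq_zero_iff.mpr hdz
      exact hv0 (hcKer v hv)
    have hdetH : IsUnit cᴴ.det := by
      rw [Matrix.det_conjTranspose]
      exact hdet.star
    have hcancel : ∀ Y : Matrix (Fin n) (Fin n) ℂ, cᴴ * Y = 0 → Y = 0 := by
      intro Y hY
      have h2 := congrArg (fun Z => cᴴ⁻¹ * Z) hY
      simpa [← Matrix.mul_assoc, Matrix.nonsing_inv_mul _ hdetH] using h2
    have hPhPH : (P * h * P)ᴴ = P * hᴴ * P := by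
      rw [conjTranspose_mul, conjTranspose_mul, hPH, ← Matrix.mul_assoc]
    have hRa0H : (P * hᴴ * P) * (P * S) = P * hᴴ * P := by
      have h2 := congrArg conjTranspose hRa0
      rw [conjTranspose_mul, hPhPH, hRH] at h2
      exact h2
    have hcH : cᴴ = P * hᴴ * P + (1 - P * S) := by
      rw [hcdef, conjTranspose_add, hPhPH, conjTranspose_sub, conjTranspose_one, hRH]
    have hcHR : cᴴ * (P * S) = P * hᴴ * P := by
      rw [hcH]
      linear_combination (norm := noncomm_ring) hRa0H - hR2
    -- L14 : R b = 0
    have hRb : (P * S) * (P * (h * Q)) = 0 := by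
      apply hcancel
      calc cᴴ * ((P * S) * (P * (h * Q))) = (cᴴ * (P * S)) * (P * (h * Q)) :=
            (Matrix.mul_assoc _ _ _).symm
        _ = (P * hᴴ * P) * (P * (h * Q)) := by rw [hcHR]
        _ = 0 := by linear_combination (norm := noncomm_ring) hab
    -- L15 : R commutes with h
    have hRa : h * (P * S) = (P * S) * h * (P * S) := by
      linear_combination (norm := noncomm_ring) hhP * S + hL9 * S + P * S * h * P * hS2
    have hRQ0 : (P * S) * Q = 0 := by
      linear_combination (norm := noncomm_ring) hcommSP * Q + S * hPQ0
    have hRc : (P * S) * h = (P * S) * h * (P * S) := by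
      linear_combination (norm := noncomm_ring)
        - P * S * h * hPQ1 - P * S * hPQ1 * (h * Q) + hRb + hRQ0 * (h * Q)
          + P * S * hhP + hRa0 + hL9
    have hcommRh : (P * S) * h = h * (P * S) := by
      linear_combination (norm := noncomm_ring) hRc - hRa
    -- apply indecomposability
    rcases hind (P * S) hRH.symm hR2 hcommRh with hR0 | hR1
    · have hPhP0 : P * h * P = 0 := by
        rw [hL9, hR0, Matrix.zero_mul, Matrix.mul_zero]
      have hhP0 : h * P = 0 := by
        calc h * P = P * (h * P) := hhP
          _ = P * h * P := by rw [Matrix.mul_assoc]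
          _ = 0 := hPhP0
      calc h * ρ = h * (P * ρ) := by rw [hPρ]
        _ = (h * P) * ρ := by rw [Matrix.mul_assoc]
        _ = 0 := by rw [hhP0, Matrix.zero_mul]
    · exfalso
      have hS1 : S = 1 := by
        calc S = S * (P * S) := by rw [hR1, Matrix.mul_one]
          _ = (S * P) * S := by rw [Matrix.mul_assoc]
          _ = (P * S) * S := by rw [← hcommSP]
          _ = P * (S * S) := by rw [Matrix.mul_assoc]
          _ = P * S := by rw [hS2]
          _ = 1 := hR1
      obtain ⟨v, hv0, hv⟩ := hker
      have hNv : (hᴴ * h) *ᵥ v = 0 := by rw [← mulVec_mulVec, hv, mulVec_zero]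
      have hSv : S *ᵥ v = 0 := Stmt11Aux.supp_mulVec_eq_zero hN hNv
      rw [hS1, one_mulVec] at hSv
      exact hv0 hSv
  · intro h0
    have hρhH : ρ * hᴴ = 0 := by
      have := congrArg conjTranspose h0
      rwa [conjTranspose_mul, hρ.1, conjTranspose_zero] at this
    simp only [lindblad]
    rw [h0, Matrix.zero_mul, Matrix.mul_assoc hᴴ h ρ, h0, Matrix.mul_zero,
      ← Matrix.mul_assoc ρ hᴴ h, hρhH, Matrix.zero_mul, add_zero, smul_zero, sub_zero]
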